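/- Let $G$ be a group, $H \subseteq G$ a finite subgroup of order $n$ invertible in $\ell$, and $B$ a $G$-algebra. The assignment sending $(b\otimes g)\chi_{sH} \in (B\otimes\ell[vHu^{-1}])^{(G/H)}$, a morphism from $uH$ to $vH$ in the category $(B\rtimes G/H)^{(G/H)}$, to $\sum_{p \in sHv^{-1}} e_{p,pg}\otimes(p\cdot b) \in M_G \otimes B$, defines a $G$-equivariant linear functor $\zeta_{G/H}: (B\rtimes G/H)^{(G/H)} \to M_G\otimes B$; in particular it is compatible with composition: $\zeta_{G/H}(f_2 \circ f_1) = \zeta_{G/H}(f_2)\,\zeta_{G/H}(f_1)$. -/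

import Mathlib

/-!
Statement 10: the assignment
`(b ⊗ g) χ_{sH} ∈ Hom(uH, vH) ↦ ∑_{p ∈ sHv⁻¹} e_{p, pg} ⊗ (p·b)`
defines a `G`-equivariant linear functor
`ζ_{G/H} : (B ⋊ G/H)^{(G/H)} → M_G ⊗ B`; in particular it is compatible
with composition.

The hom-module `(B ⋊ G/H)^{(G/H)}(x,y) = B ⊗ ℓ[yHx⁻¹] ⊗ ℓ^{(G/H)}` is
modeled as `({g // g•x = y} × G/H) →₀ B`; `M_G ⊗ B` as `(G × G) →₀ B`.
The set `sHv⁻¹` is parametrized as `{s.out * h * v.out⁻¹ : h ∈ H}` via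
coset representatives.
-/

set_option linter.unusedSectionVars false
open scoped Classical

variable {ℓ G B : Type} [CommRing ℓ] [Group G]
variable [NonUnitalNonAssocSemiring B] [Module ℓ B] [DistribMulAction G B]

/-- The hom-module `(B ⋊ G/H)^{(G/H)}(x,y)`; an element
`(g, t) ↦ b` stands for `(b ⊗ g) χ_t`. -/
abbrev HomT (H : Subgroup G) (B : Type) [AddCommMonoid B] (x y : G ⧸ H) :=
  ({g : G // g • x = y} × (G ⧸ H)) →₀ B

/-- Composition in `(B ⋊ G/H)^{(G/H)}`:
`((b⊗g)χ_t) ∘ ((b'⊗g')χ_{t'}) = δ_{t,t'} (b (g·b') ⊗ g g') χ_t`. -/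
noncomputable def compT {H : Subgroup G} {x y z : G ⧸ H}
    (m2 : HomT H B y z) (m1 : HomT H B x y) : HomT H B x z :=
  m2.sum fun gt b => m1.sum fun gt' b' =>
    if gt.2 = gt'.2 then
      Finsupp.single
        (⟨gt.1.1 * gt'.1.1, by rw [mul_smul, gt'.1.2]; exact gt.1.2⟩, gt.2)
        (b * (gt.1.1 • b'))
    else 0

/-- `ζ_{G/H}` on the hom-module `Hom(x, y)`:
`(b ⊗ g) χ_t ↦ ∑_{p ∈ tHy⁻¹} e_{p, pg} ⊗ (p·b)`. -/
noncomputable def zeta {H : Subgroup G} [Fintype H] {x y : G ⧸ H}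
    (m : HomT H B x y) : (G × G) →₀ B :=
  m.sum fun gt b => ∑ h : H,
    Finsupp.single
      (gt.2.out * (h : G) * y.out⁻¹, gt.2.out * (h : G) * y.out⁻¹ * gt.1.1)
      ((gt.2.out * (h : G) * y.out⁻¹) • b)

/-- The multiplication of `M_G ⊗ B` (finitely supported `G × G` matrices). -/
noncomputable def mgbMul (a b : (G × G) →₀ B) : (G × G) →₀ B :=
  a.sum fun p x => b.sum fun q y =>
    if p.2 = q.1 then Finsupp.single (p.1, q.2) (x * y) else 0

/-- The `G`-action on the hom-modules of `(B ⋊ G/H)^{(G/H)}` (translation on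
the `ℓ^{(G/H)}` factor). -/
noncomputable def domAct {H : Subgroup G} {x y : G ⧸ H} (g₀ : G)
    (m : HomT H B x y) : HomT H B x y :=
  m.sum fun gt b => Finsupp.single (gt.1, g₀ • gt.2) b

/-- The `G`-action on `M_G ⊗ B`: `g₀ • (e_{p,q} ⊗ b) = e_{g₀p, g₀q} ⊗ g₀·b`. -/
noncomputable def codAct (g₀ : G) (e : (G × G) →₀ B) : (G × G) →₀ B :=
  e.sum fun p b => Finsupp.single (g₀ * p.1, g₀ * p.2) (g₀ • b)


section Aux

variable {H : Subgroup G} [Fintype H]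

/-! ### Basic lemmas about `zeta` -/

lemma zeta_single {x y : G ⧸ H} (a : {g : G // g • x = y} × (G ⧸ H)) (b : B) :
    zeta (Finsupp.single a b) = ∑ h : H,
      Finsupp.single (a.2.out * (h : G) * y.out⁻¹, a.2.out * (h : G) * y.out⁻¹ * a.1.1)
        ((a.2.out * (h : G) * y.out⁻¹) • b) :=
  Finsupp.sum_single_index (by simp)

lemma zeta_zero {x y : G ⧸ H} : zeta (0 : HomT H B x y) = 0 :=
  Finsupp.sum_zero_index

lemma zeta_add {x y : G ⧸ H} (m m' : HomT H B x y) :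
    zeta (m + m') = zeta m + zeta m' :=
  Finsupp.sum_add_index' (by simp) (fun a b₁ b₂ => by
    simp [smul_add, Finsupp.single_add, Finset.sum_add_distrib])

lemma zeta_smul {x y : G ⧸ H}
    (hact : ∀ (g : G) (c : ℓ) (b : B), g • (c • b) = c • (g • b))
    (c : ℓ) (m : HomT H B x y) : zeta (c • m) = c • zeta m := by
  unfold zeta
  rw [Finsupp.sum_smul_index' (fun a => by simp), Finsupp.smul_sum]
  refine Finsupp.sum_congr fun a _ => ?_
  rw [Finset.smul_sum]
  exact Finset.sum_congr rfl fun h _ => by rw [hact, Finsupp.smul_single]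

/-! ### Basic lemmas about `compT` -/

lemma compT_zero_left {x y z : G ⧸ H} (m1 : HomT H B x y) :
    compT (0 : HomT H B y z) m1 = 0 :=
  Finsupp.sum_zero_index

lemma compT_zero_right {x y z : G ⧸ H} (m2 : HomT H B y z) :
    compT m2 (0 : HomT H B x y) = 0 := by
  unfold compT
  simp [Finsupp.sum_zero_index]

lemma compT_add_left {x y z : G ⧸ H} (m m' : HomT H B y z) (m1 : HomT H B x y) :
    compT (m + m') m1 = compT m m1 + compT m' m1 :=
  Finsupp.sum_add_index' (fun a => by simp) (fun a b₁ b₂ => by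
    rw [← Finsupp.sum_add]
    exact Finsupp.sum_congr fun a' _ => by
      by_cases h : a.2 = a'.2 <;> simp [h, add_mul, Finsupp.single_add])

lemma compT_add_right {x y z : G ⧸ H} (m2 : HomT H B y z) (m m' : HomT H B x y) :
    compT m2 (m + m') = compT m2 m + compT m2 m' := by
  unfold compT
  rw [← Finsupp.sum_add]
  refine Finsupp.sum_congr fun a _ => ?_
  exact Finsupp.sum_add_index' (fun a' => by simp) (fun a' b₁ b₂ => by
    by_cases h : a.2 = a'.2 <;> simp [h, smul_add, mul_add, Finsupp.single_add])

lemma compT_single_single {x y z : G ⧸ H}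
    (a2 : {g : G // g • y = z} × (G ⧸ H)) (b2 : B)
    (a1 : {g : G // g • x = y} × (G ⧸ H)) (b1 : B) :
    compT (Finsupp.single a2 b2) (Finsupp.single a1 b1) =
      if a2.2 = a1.2 then
        Finsupp.single
          (⟨a2.1.1 * a1.1.1, by rw [mul_smul, a1.1.2]; exact a2.1.2⟩, a2.2)
          (b2 * (a2.1.1 • b1))
      else 0 := by
  unfold compT
  rw [Finsupp.sum_single_index (by simp), Finsupp.sum_single_index (by simp)]

/-! ### Basic lemmas about `mgbMul` -/

lemma mgbMul_zero_left (e : (G × G) →₀ B) : mgbMul 0 e = 0 :=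
  Finsupp.sum_zero_index

lemma mgbMul_zero_right (e : (G × G) →₀ B) : mgbMul e 0 = 0 := by
  unfold mgbMul
  simp [Finsupp.sum_zero_index]

lemma mgbMul_add_left (a a' e : (G × G) →₀ B) :
    mgbMul (a + a') e = mgbMul a e + mgbMul a' e :=
  Finsupp.sum_add_index' (fun p => by simp) (fun p c₁ c₂ => by
    rw [← Finsupp.sum_add]
    exact Finsupp.sum_congr fun q _ => by
      by_cases h : p.2 = q.1 <;> simp [h, add_mul, Finsupp.single_add])

lemma mgbMul_add_right (e a a' : (G × G) →₀ B) :
    mgbMul e (a + a') = mgbMul e a + mgbMul e a' := by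
  unfold mgbMul
  rw [← Finsupp.sum_add]
  refine Finsupp.sum_congr fun p _ => ?_
  exact Finsupp.sum_add_index' (fun q => by simp) (fun q c₁ c₂ => by
    by_cases h : p.2 = q.1 <;> simp [h, mul_add, Finsupp.single_add])

lemma mgbMul_single_single (p q : G × G) (c d : B) :
    mgbMul (Finsupp.single p c) (Finsupp.single q d) =
      if p.2 = q.1 then Finsupp.single (p.1, q.2) (c * d) else 0 := by
  unfold mgbMul
  rw [Finsupp.sum_single_index (by simp), Finsupp.sum_single_index (by simp)]

lemma mgbMul_sum_left {ι : Type*} (s : Finset ι) (f : ι → (G × G) →₀ B)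
    (e : (G × G) →₀ B) :
    mgbMul (∑ i ∈ s, f i) e = ∑ i ∈ s, mgbMul (f i) e :=
  map_sum (AddMonoidHom.mk ⟨fun a => mgbMul a e, mgbMul_zero_left e⟩
    (fun a a' => mgbMul_add_left a a' e)) f s

lemma mgbMul_sum_right {ι : Type*} (e : (G × G) →₀ B) (s : Finset ι)
    (f : ι → (G × G) →₀ B) :
    mgbMul e (∑ i ∈ s, f i) = ∑ i ∈ s, mgbMul e (f i) :=
  map_sum (AddMonoidHom.mk ⟨fun a => mgbMul e a, mgbMul_zero_right e⟩
    (fun a a' => mgbMul_add_right e a a')) f s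

lemma mgbMul_sum_sum {ι κ : Type*} (s : Finset ι) (u : Finset κ)
    (f : ι → (G × G) →₀ B) (g : κ → (G × G) →₀ B) :
    mgbMul (∑ i ∈ s, f i) (∑ j ∈ u, g j) = ∑ i ∈ s, ∑ j ∈ u, mgbMul (f i) (g j) := by
  rw [mgbMul_sum_left]
  exact Finset.sum_congr rfl fun i _ => mgbMul_sum_right _ _ _

/-! ### Basic lemmas about the actions -/

lemma domAct_single {x y : G ⧸ H} (g₀ : G)
    (a : {g : G // g • x = y} × (G ⧸ H)) (b : B) :
    domAct g₀ (Finsupp.single a b) = Finsupp.single (a.1, g₀ • a.2) b :=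
  Finsupp.sum_single_index (by simp)

lemma domAct_zero {x y : G ⧸ H} (g₀ : G) : domAct g₀ (0 : HomT H B x y) = 0 :=
  Finsupp.sum_zero_index

lemma domAct_add {x y : G ⧸ H} (g₀ : G) (m m' : HomT H B x y) :
    domAct g₀ (m + m') = domAct g₀ m + domAct g₀ m' :=
  Finsupp.sum_add_index' (fun a => by simp) (fun a b₁ b₂ => by
    simp [Finsupp.single_add])

lemma codAct_single (g₀ : G) (p : G × G) (b : B) :
    codAct g₀ (Finsupp.single p b) = Finsupp.single (g₀ * p.1, g₀ * p.2) (g₀ • b) :=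
  Finsupp.sum_single_index (by simp)

lemma codAct_zero (g₀ : G) : codAct g₀ (0 : (G × G) →₀ B) = 0 :=
  Finsupp.sum_zero_index

lemma codAct_add (g₀ : G) (e e' : (G × G) →₀ B) :
    codAct g₀ (e + e') = codAct g₀ e + codAct g₀ e' :=
  Finsupp.sum_add_index' (fun p => by simp) (fun p b₁ b₂ => by
    simp [smul_add, Finsupp.single_add])

lemma codAct_sum {ι : Type*} (g₀ : G) (s : Finset ι) (f : ι → (G × G) →₀ B) :
    codAct g₀ (∑ i ∈ s, f i) = ∑ i ∈ s, codAct g₀ (f i) :=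
  map_sum (AddMonoidHom.mk ⟨codAct g₀, codAct_zero g₀⟩ (codAct_add g₀)) f s

/-! ### Coset bookkeeping -/

lemma mk_mul_out {x y : G ⧸ H} {g : G} (hg : g • x = y) :
    QuotientGroup.mk (g * x.out) = y := by
  conv_rhs => rw [← hg, ← QuotientGroup.out_eq' x]
  rw [MulAction.Quotient.smul_mk, smul_eq_mul]

lemma key_mem {x y : G ⧸ H} {g : G} (hg : g • x = y) :
    y.out⁻¹ * (g * x.out) ∈ H := by
  have h2 : (g * x.out)⁻¹ * y.out ∈ H :=
    QuotientGroup.eq.mp ((mk_mul_out hg).trans (QuotientGroup.out_eq' y).symm)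
  simpa [mul_inv_rev, mul_assoc] using H.inv_mem h2

/-! ### The single cases of the two main identities -/

lemma zeta_compT_single {x y z : G ⧸ H}
    (hsm : ∀ (g : G) (a b : B), g • (a * b) = (g • a) * (g • b))
    (a2 : {g : G // g • y = z} × (G ⧸ H)) (b2 : B)
    (a1 : {g : G // g • x = y} × (G ⧸ H)) (b1 : B) :
    zeta (compT (Finsupp.single a2 b2) (Finsupp.single a1 b1)) =
      mgbMul (zeta (Finsupp.single a2 b2)) (zeta (Finsupp.single a1 b1)) := by
  obtain ⟨⟨g, hg⟩, t⟩ := a2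
  obtain ⟨⟨g', hg'⟩, t'⟩ := a1
  rw [compT_single_single, zeta_single, zeta_single, mgbMul_sum_sum]
  simp only [mgbMul_single_single]
  have hk : z.out⁻¹ * (g * y.out) ∈ H := key_mem hg
  set k : H := ⟨z.out⁻¹ * (g * y.out), hk⟩ with hkdef
  by_cases ht : t = t'
  · subst ht
    rw [if_pos rfl, zeta_single]
    refine Finset.sum_congr rfl fun h _ => ?_
    have hcoe : ((h * k : H) : G) = (h : G) * (z.out⁻¹ * (g * y.out)) := rfl
    have hq : t.out * (h : G) * z.out⁻¹ * g = t.out * ((h * k : H) : G) * y.out⁻¹ := by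
      rw [hcoe]; group
    refine ((Finset.sum_eq_single (h * k) ?_ ?_).trans ?_).symm
    · intro h' _ hne
      rw [ite_eq_right_iff]
      intro hcond
      refine (hne (Subtype.ext (show (h' : G) = ((h * k : H) : G) from ?_))).elim
      have hstep : (h' : G) = t.out⁻¹ * (t.out * (h' : G) * y.out⁻¹) * y.out := by group
      rw [hstep, ← hcond, hcoe]
      group
    · intro hmem; exact absurd (Finset.mem_univ _) hmem
    · rw [if_pos hq, ← hq]
      simp only [← mul_assoc]
      congr 1
      simp only [hsm, mul_smul]
  · rw [if_neg ht, zeta_zero]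
    symm
    refine Finset.sum_eq_zero fun h _ => Finset.sum_eq_zero fun h' _ => ?_
    rw [ite_eq_right_iff]
    intro hcond
    refine (ht ?_).elim
    have e1 : t.out * ((h : G) * (z.out⁻¹ * (g * y.out))) = t'.out * (h' : G) := by
      simpa [mul_assoc] using congrArg (· * y.out) hcond
    calc t = QuotientGroup.mk t.out := (QuotientGroup.out_eq' t).symm
      _ = QuotientGroup.mk (t.out * ((h : G) * (z.out⁻¹ * (g * y.out)))) :=
          (QuotientGroup.mk_mul_of_mem t.out (H.mul_mem h.2 hk)).symm
      _ = QuotientGroup.mk (t'.out * (h' : G)) := by rw [e1]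
      _ = QuotientGroup.mk t'.out := QuotientGroup.mk_mul_of_mem t'.out h'.2
      _ = t' := QuotientGroup.out_eq' t'

lemma zeta_domAct_single {x y : G ⧸ H} (g₀ : G)
    (a : {g : G // g • x = y} × (G ⧸ H)) (b : B) :
    zeta (domAct g₀ (Finsupp.single a b)) = codAct g₀ (zeta (Finsupp.single a b)) := by
  obtain ⟨⟨g, hg⟩, t⟩ := a
  rw [domAct_single, zeta_single, zeta_single, codAct_sum]
  simp only [codAct_single]
  have hmem : (g₀ * t.out)⁻¹ * (g₀ • t).out ∈ H :=
    QuotientGroup.eq.mp ((mk_mul_out (rfl : g₀ • t = g₀ • t)).trans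
      (QuotientGroup.out_eq' _).symm)
  set k₀ : H := ⟨(g₀ * t.out)⁻¹ * (g₀ • t).out, hmem⟩ with hk₀def
  have hout : (g₀ • t).out = g₀ * t.out * (k₀ : G) :=
    (mul_inv_cancel_left (g₀ * t.out) ((g₀ • t).out)).symm
  refine Fintype.sum_equiv (Equiv.mulLeft k₀) _ _ fun h => ?_
  have hP : (g₀ • t).out * (h : G) * y.out⁻¹
      = g₀ * (t.out * ((Equiv.mulLeft k₀ h : H) : G) * y.out⁻¹) := by
    have hcoe : ((Equiv.mulLeft k₀ h : H) : G) = (k₀ : G) * (h : G) := rfl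
    rw [hcoe, hout]; group
  rw [hP, mul_smul g₀]
  simp only [mul_assoc]

end Aux

/-- `ζ_{G/H}` is a `G`-equivariant linear functor
`(B ⋊ G/H)^{(G/H)} → M_G ⊗ B`: it is additive, `ℓ`-linear, `G`-equivariant
and compatible with composition. -/
theorem stmt10 (H : Subgroup G) [Fintype H]
    (v : ℓ) (hv : (Fintype.card H : ℓ) * v = 1)
    (hsm : ∀ (g : G) (a b : B), g • (a * b) = (g • a) * (g • b))
    (hact : ∀ (g : G) (c : ℓ) (b : B), g • (c • b) = c • (g • b)) :
    (∀ {x y z : G ⧸ H} (m2 : HomT H B y z) (m1 : HomT H B x y),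
      zeta (compT m2 m1) = mgbMul (zeta m2) (zeta m1)) ∧
    (∀ {x y : G ⧸ H} (g₀ : G) (m : HomT H B x y),
      zeta (domAct g₀ m) = codAct g₀ (zeta m)) ∧
    (∀ {x y : G ⧸ H} (m m' : HomT H B x y),
      zeta (m + m') = zeta m + zeta m') ∧
    (∀ {x y : G ⧸ H} (c : ℓ) (m : HomT H B x y),
      zeta (c • m) = c • zeta m) := by
  refine ⟨?_, ?_, ?_, ?_⟩
  · intro x y z m2 m1
    induction m2 using Finsupp.induction_linear with
    | zero => rw [compT_zero_left, zeta_zero, zeta_zero, mgbMul_zero_left]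
    | add f g hf hg => rw [compT_add_left, zeta_add, hf, hg, zeta_add, mgbMul_add_left]
    | single a b =>
      induction m1 using Finsupp.induction_linear with
      | zero => rw [compT_zero_right, zeta_zero, zeta_zero, mgbMul_zero_right]
      | add f g hf hg => rw [compT_add_right, zeta_add, hf, hg, zeta_add, mgbMul_add_right]
      | single a' b' => exact zeta_compT_single hsm a b a' b'
  · intro x y g₀ m
    induction m using Finsupp.induction_linear with
    | zero => rw [domAct_zero, zeta_zero, codAct_zero]
    | add f g hf hg => rw [domAct_add, zeta_add, hf, hg, zeta_add, codAct_add]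
    | single a b => exact zeta_domAct_single g₀ a b
  · intro x y m m'
    exact zeta_add m m'
  · intro x y c m
    exact zeta_smul hact c m
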